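/- Let R be an order in B with O_K ⊆ R, where K = F(√(-D)) and (-D, a) is the fundamental discriminant pair, and assume the relative discriminant D_K is coprime to the discriminant N of R and the local Eichler invariants of R are nonzero. Suppose: (i) cl(K) acts freely on the set of special points X_{D,a} = R̂^×\{x ∈ B̂^× : O_{D,a} ⊆ R_x}/K^×, (ii) Bil(R) acts transitively and freely on X_{D,a}/cl(K), and (iii) 1 ∈ X_{D,a}. Then η_D = Σ_{z ∈ Bil(R)} ψ_{P_D}·z, where η_D = (1/t_K)Σ_{x ∈ X_{D,a}} φ_{x,P_D} and ψ_{P_D} = (1/t_K)Σ_{a ∈ cl(K)} φ_{a,P_D}; consequently, for any quaternionic modular form φ fixed by Bil(R), ⟨φ, η_D⟩ = 2^{ω(N)}·⟨φ, ψ_{P_D}⟩. -/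

import Mathlib

/-- Abstract setting: `M` is the space of quaternionic modular forms
(an inner product space via the height pairing), `X` the finite set of special
points `X_{D,a}`, `Φ : X → M` the map `x ↦ φ_{x,P_D}`, `x₀` the base point `1 ∈ X`,
`CK = cl(K)` acting freely on `X`, and `W = Bil(R) ≅ (ℤ/2)^{ω(N)}` (so
`|W| = 2^{ω(N)}`) acting on `X` on the left, commuting with the `CK`-action and
acting transitively and freely on `X/cl(K)` (hypothesis `htransfree`).  The right
action `actM` of `W` on `M` is unitary, linear and satisfies
`Φ(x)·z = Φ(z⁻¹•x)` (equation `φ_{x,v}·z = φ_{z⁻¹x,v}`).  With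
`η_D = (1/t_K) Σ_{x ∈ X} Φ(x)` and `ψ = (1/t_K) Σ_{a ∈ cl(K)} Φ(a•x₀)`, the
conclusions are `η_D = Σ_{z ∈ W} ψ·z` and, for any form `φ` fixed by `W = Bil(R)`,
`⟨φ, η_D⟩ = 2^{ω(N)}·⟨φ, ψ⟩`. -/
theorem eta_eq_sum_psi_and_pairing
    {M : Type*} [NormedAddCommGroup M] [InnerProductSpace ℂ M]
    (W CK X : Type*) [Group W] [Group CK]
    [Fintype W] [Fintype CK] [Fintype X]
    [MulAction W X] [MulAction CK X]
    (hcomm : ∀ (z : W) (a : CK) (x : X), z • (a • x) = a • (z • x))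
    (Φ : X → M) (x₀ : X)
    (actM : M → W → M)
    (hlin : ∀ z : W, IsLinearMap ℂ (fun m : M => actM m z))
    (hone : ∀ m : M, actM m 1 = m)
    (hmulz : ∀ (m : M) (z z' : W), actM m (z * z') = actM (actM m z) z')
    (hequiv : ∀ (x : X) (z : W), actM (Φ x) z = Φ (z⁻¹ • x))
    (hinv : ∀ (m n : M) (z : W), (inner ℂ (actM m z) (actM n z) : ℂ) = (inner ℂ m n : ℂ))
    (hCKfree : ∀ (a : CK) (x : X), a • x = x → a = 1)
    (htransfree : ∀ x : X, ∃! z : W, ∃ a : CK, x = z • (a • x₀))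
    (tK : ℕ) (htK : 0 < tK)
    (ω : ℕ) (hW : Nat.card W = 2 ^ ω)
    (φ : M) (hφ : ∀ z : W, actM φ z = φ) :
    ((tK : ℂ)⁻¹ • ∑ x : X, Φ x)
        = ∑ z : W, actM ((tK : ℂ)⁻¹ • ∑ a : CK, Φ (a • x₀)) z ∧
      (inner ℂ φ ((tK : ℂ)⁻¹ • ∑ x : X, Φ x) : ℂ)
        = (2 ^ ω : ℂ) * (inner ℂ φ ((tK : ℂ)⁻¹ • ∑ a : CK, Φ (a • x₀)) : ℂ) := by

  -- bijection W × CK ≃ X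
  have hbij : Function.Bijective (fun p : W × CK => p.1 • (p.2 • x₀)) := by
    constructor
    · rintro ⟨z, a⟩ ⟨z', a'⟩ h
      simp only at h
      obtain ⟨w, hw, huniq⟩ := htransfree (z • (a • x₀))
      have hz : z = w := huniq z ⟨a, rfl⟩
      have hz' : z' = w := huniq z' ⟨a', h⟩
      have hzz : z = z' := hz.trans hz'.symm
      subst hzz
      have ha : a • x₀ = a' • x₀ := by
        have := h
        exact smul_left_cancel z this
      have : (a'⁻¹ * a) • x₀ = x₀ := by
        rw [mul_smul, ha, inv_smul_smul]
      have := hCKfree _ _ this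
      have : a = a' := by
        have h2 : a'⁻¹ * a = 1 := this
        have := congrArg (fun t => a' * t) h2
        simpa [mul_assoc] using this
      exact Prod.ext rfl this
    · intro x
      obtain ⟨w, ⟨a, ha⟩, _⟩ := htransfree x
      exact ⟨⟨w, a⟩, ha.symm⟩
  have hsum : (∑ x : X, Φ x) = ∑ z : W, ∑ a : CK, Φ (z • (a • x₀)) := by
    rw [← Function.Bijective.sum_comp hbij Φ, Fintype.sum_prod_type]
  -- first conclusion
  have key : ((tK : ℂ)⁻¹ • ∑ x : X, Φ x)
      = ∑ z : W, actM ((tK : ℂ)⁻¹ • ∑ a : CK, Φ (a • x₀)) z := by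
    have hlinmap : ∀ z : W, actM ((tK : ℂ)⁻¹ • ∑ a : CK, Φ (a • x₀)) z
        = (tK : ℂ)⁻¹ • ∑ a : CK, Φ (z⁻¹ • (a • x₀)) := by
      intro z
      have h1 : actM ((tK : ℂ)⁻¹ • ∑ a : CK, Φ (a • x₀)) z
          = (tK : ℂ)⁻¹ • actM (∑ a : CK, Φ (a • x₀)) z := (hlin z).map_smul _ _
      have h2 : actM (∑ a : CK, Φ (a • x₀)) z = ∑ a : CK, actM (Φ (a • x₀)) z :=
        map_sum ((hlin z).mk') _ _
      rw [h1, h2]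
      congr 1
      exact Finset.sum_congr rfl fun a _ => hequiv _ z
    rw [hsum]
    calc ((tK : ℂ)⁻¹ • ∑ z : W, ∑ a : CK, Φ (z • (a • x₀)))
        = ∑ z : W, (tK : ℂ)⁻¹ • ∑ a : CK, Φ (z • (a • x₀)) := Finset.smul_sum
      _ = ∑ z : W, (tK : ℂ)⁻¹ • ∑ a : CK, Φ (z⁻¹ • (a • x₀)) := by
          refine (Fintype.sum_equiv (Equiv.inv W) _ _ fun z => ?_).symm
          simp
      _ = ∑ z : W, actM ((tK : ℂ)⁻¹ • ∑ a : CK, Φ (a • x₀)) z := by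
          refine Finset.sum_congr rfl fun z _ => (hlinmap z).symm
  refine ⟨key, ?_⟩
  rw [key, inner_sum]
  have : ∀ z : W, (inner ℂ φ (actM ((tK : ℂ)⁻¹ • ∑ a : CK, Φ (a • x₀)) z) : ℂ)
      = inner ℂ φ ((tK : ℂ)⁻¹ • ∑ a : CK, Φ (a • x₀)) := by
    intro z
    calc (inner ℂ φ (actM ((tK : ℂ)⁻¹ • ∑ a : CK, Φ (a • x₀)) z) : ℂ)
        = inner ℂ (actM φ z) (actM ((tK : ℂ)⁻¹ • ∑ a : CK, Φ (a • x₀)) z) := by rw [hφ z]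
      _ = inner ℂ φ ((tK : ℂ)⁻¹ • ∑ a : CK, Φ (a • x₀)) := hinv _ _ z
  rw [Finset.sum_congr rfl fun z _ => this z, Finset.sum_const]
  have hcard : (Finset.univ : Finset W).card = 2 ^ ω := by
    rw [Finset.card_univ, ← Nat.card_eq_fintype_card]
    exact hW
  rw [hcard, nsmul_eq_mul]
  push_cast
  ring
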